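/- arXiv:1403.0250 — 2 statements merged into one kernel-verified Lean document; each statement's English description precedes it below -/
import Mathlib

section
/- Let α, α′ and d be integers with d ≥ 0 and 1 ≤ α′ ≤ α, and fix positive integers r_0 = 1, r_1, …, r_{d+1} with r_{e−1} dividing r_e for each e. Then, as functions on {0,1}^α × {0,1}^α, the coloring c_d refines the function (v,w) ↦ c_d(π_{α′}(v), π_{α′}(w)). -/
/-!
Coloring machinery of Conlon–Fox–Lee–Sudakov. Vectors in `{0,1}^α` are modelled as
`Bool` lists of length `α`. Fix block lengths `r 0 = 1, r 1, …` with `r d ∣ r (d+1)`.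
-/

/-- The blocks of resolution with block length `r`: split a vector into consecutive
blocks of length `r` (the last block may be shorter). -/
def blocksOf (r : ℕ) (v : List Bool) : List (List Bool) := v.toChunks r

/-- The function `η_d` (with `r = r_d`): records the position `i` of the first pair of
differing blocks of resolution `d` together with the unordered pair `{v_i, w_i}` of
these blocks; it takes the value `none` (playing the role of `0`) when `v = w`. -/
def eta (r : ℕ) (v w : List Bool) : Option (ℕ × Sym2 (List Bool)) :=
  ((((blocksOf r v).zip (blocksOf r w)).zipIdx.map Prod.swap).find? (fun q => q.2.1 != q.2.2)).map
    (fun q => (q.1, s(q.2.1, q.2.2)))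

/-- The function `ξ_d`: apply `η_d` to each corresponding pair of blocks of
resolution `d+1`. -/
def xi (r : ℕ → ℕ) (d : ℕ) (v w : List Bool) : List (Option (ℕ × Sym2 (List Bool))) :=
  ((blocksOf (r (d+1)) v).zip (blocksOf (r (d+1)) w)).map fun q => eta (r d) q.1 q.2

/-- The type of colors used by the coloring `c_p`. -/
abbrev EGColor := List (List (Option (ℕ × Sym2 (List Bool))))

instance : DecidableEq (List (Option (ℕ × Sym2 (List Bool)))) := instDecidableEqList
instance : DecidableEq EGColor := instDecidableEqList

/-- The coloring `c_p (v,w) = (ξ_p(v,w), ξ_{p-1}(v,w), …, ξ_0(v,w))`. -/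
def cColor (r : ℕ → ℕ) (p : ℕ) (v w : List Bool) : EGColor :=
  (List.range (p+1)).map fun j => xi r (p - j) v w

/-- The set of colors appearing under `c_p` on (unordered) pairs of distinct
elements of `S`. -/
def colorsOn (r : ℕ → ℕ) (p : ℕ) (S : Finset (List Bool)) : Finset EGColor :=
  ((S ×ˢ S).filter fun q => q.1 ≠ q.2).image fun q => cColor r p q.1 q.2

/-- The vertex set `{0,1}^α`, realized as the set of all `Bool` lists of length `α`. -/
def allVecs (α : ℕ) : Finset (List Bool) :=
  Finset.univ.image fun v : Fin α → Bool => List.ofFn v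

/-- `alphaD rd α`: the largest multiple of `rd` that is strictly less than `α`
(for `α, rd ≥ 1`). -/
def alphaD (rd α : ℕ) : ℕ := rd * ((α - 1) / rd)

/-- The set `C_E^{(d)}` of emerging colors of `S` at resolution `d`: the unordered pairs
`{v'', w''}` of final segments of elements `v = (v', v'')`, `w = (w', w'')` of `S`
(split at `α_d`) with `v' = w'` and `v'' ≠ w''`. -/
def CEset (r : ℕ → ℕ) (α : ℕ) (S : Finset (List Bool)) (d : ℕ) : Finset (Sym2 (List Bool)) :=
  ((S ×ˢ S).filter fun q =>
      q.1.take (alphaD (r d) α) = q.2.take (alphaD (r d) α) ∧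
      q.1.drop (alphaD (r d) α) ≠ q.2.drop (alphaD (r d) α)).image
    fun q => s(q.1.drop (alphaD (r d) α), q.2.drop (alphaD (r d) α))

/-- The set `C_I^{(d)}` of inherited colors of `S` at resolution `d`: the pairs
`(c_p(v', w'), η_{d-1}(v'', w''))` over elements `v = (v', v'')`, `w = (w', w'')` of `S`
(split at `α_d`) with `v' ≠ w'`. -/
def CIset (r : ℕ → ℕ) (p α : ℕ) (S : Finset (List Bool)) (d : ℕ) :
    Finset (EGColor × Option (ℕ × Sym2 (List Bool))) :=
  ((S ×ˢ S).filter fun q =>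
      q.1.take (alphaD (r d) α) ≠ q.2.take (alphaD (r d) α)).image
    fun q => (cColor r p (q.1.take (alphaD (r d) α)) (q.2.take (alphaD (r d) α)),
              eta (r (d-1)) (q.1.drop (alphaD (r d) α)) (q.2.drop (alphaD (r d) α)))


def chF : ℕ → List Bool → List (List Bool)
  | _, [] => []
  | n, x :: xs => (x :: xs.take n) :: chF n (xs.drop n)
termination_by n l => l.length
decreasing_by
  simp only [List.length_drop, List.length_cons]; omega

lemma go_spec (n : ℕ) : ∀ (xs : List Bool) (a : Array Bool) (acc : Array (List Bool)),
    1 ≤ a.size → a.size ≤ n + 1 →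
    List.toChunks.go (n+1) xs a acc
      = acc.toList ++ (a.toList ++ xs.take (n + 1 - a.size)) :: chF n (xs.drop (n + 1 - a.size)) := by
  intro xs
  induction xs with
  | nil =>
    intro a acc h1 h2
    simp [List.toChunks.go, chF]
  | cons x xs ih =>
    intro a acc h1 h2
    rw [List.toChunks.go]
    by_cases hs : a.size = n + 1
    · simp only [hs, beq_self_eq_true, if_true]
      rw [ih _ _ (by simp) (by simp)]
      have h0 : n + 1 - a.size = 0 := by omega
      simp [h0, chF]
    · have hbeq : (a.size == n + 1) = false := by simp [hs]
      simp only [hbeq, Bool.false_eq_true, if_false]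
      rw [ih _ _ (by simp only [Array.size_push]; omega) (by simp only [Array.size_push]; omega)]
      have h3 : n + 1 - (a.push x).size = n - a.size := by simp only [Array.size_push]; omega
      have h4 : n + 1 - a.size = (n - a.size) + 1 := by omega
      simp [h3, h4]

lemma toChunks_eq (n : ℕ) (l : List Bool) : l.toChunks (n+1) = chF n l := by
  cases l with
  | nil => simp [List.toChunks, chF]
  | cons x xs =>
    show List.toChunks.go (n+1) xs #[x] #[] = _
    rw [go_spec n xs #[x] #[] (by simp) (by simp)]
    simp [chF]

lemma blocksOf_nil (R : ℕ) : blocksOf R [] = [] := by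
  cases R <;> rfl

lemma blocksOf_cons (R : ℕ) (hR : 0 < R) (l : List Bool) (hl : l ≠ []) :
    blocksOf R l = l.take R :: blocksOf R (l.drop R) := by
  obtain ⟨n, rfl⟩ : ∃ n, R = n + 1 := ⟨R - 1, by omega⟩
  obtain ⟨x, xs, rfl⟩ : ∃ a l', l = a :: l' := by
    cases l with
    | nil => exact absurd rfl hl
    | cons a l' => exact ⟨a, l', rfl⟩
  simp [blocksOf, toChunks_eq, chF]

/-- A simple recursive form of the first-differing-entry search. -/
def findD : List (List Bool × List Bool) → Option (ℕ × Sym2 (List Bool))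
  | [] => none
  | (a, c) :: L => if a = c then (findD L).map (fun q => (q.1 + 1, q.2)) else some (0, s(a, c))

lemma find?_enumFrom_eq (L : List (List Bool × List Bool)) : ∀ n : ℕ,
    (((L.zipIdx n).map Prod.swap).find? (fun q => q.2.1 != q.2.2)).map (fun q => (q.1, s(q.2.1, q.2.2)))
      = (findD L).map (fun q => (q.1 + n, q.2)) := by
  induction L with
  | nil => intro n; rfl
  | cons ac L ih =>
    intro n
    obtain ⟨a, c⟩ := ac
    rw [List.zipIdx_cons, List.map_cons, Prod.swap_prod_mk, List.find?_cons]
    by_cases hac : a = c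
    · have : ((n, (a, c)).2.1 != (n, (a, c)).2.2) = false := by simp [hac]
      rw [this, ih (n + 1)]
      simp only [findD, if_pos hac, Option.map_map]
      cases findD L with
      | none => rfl
      | some q => simp; omega
    · have : ((n, (a, c)).2.1 != (n, (a, c)).2.2) = true := by simp [hac]
      rw [this]
      simp [findD, if_neg hac]

lemma eta_spec (re : ℕ) (s t : List Bool) :
    eta re s t = findD ((blocksOf re s).zip (blocksOf re t)) := by
  have := find?_enumFrom_eq ((blocksOf re s).zip (blocksOf re t)) 0
  simpa [eta] using this

lemma eta_nil (re : ℕ) : eta re [] [] = none := by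
  simp [eta_spec, blocksOf_nil, findD]

lemma eta_cons (re : ℕ) (hre : 0 < re) (s t : List Bool) (hs : s ≠ []) (ht : t ≠ []) :
    eta re s t = if s.take re = t.take re then
        (eta re (s.drop re) (t.drop re)).map (fun q => (q.1 + 1, q.2))
      else some (0, s(s.take re, t.take re)) := by
  rw [eta_spec, blocksOf_cons re hre s hs, blocksOf_cons re hre t ht]
  rw [show ((s.take re :: blocksOf re (s.drop re)).zip (t.take re :: blocksOf re (t.drop re)))
      = (s.take re, t.take re) :: ((blocksOf re (s.drop re)).zip (blocksOf re (t.drop re))) from rfl]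
  rw [findD, ← eta_spec]

lemma eta_eq_none_iff_aux (re : ℕ) (hre : 0 < re) : ∀ (N : ℕ) (s t : List Bool),
    s.length ≤ N → s.length = t.length → (eta re s t = none ↔ s = t) := by
  intro N
  induction N with
  | zero =>
    intro s t hN hlen
    have hs : s = [] := List.length_eq_zero_iff.mp (by omega)
    have ht : t = [] := List.length_eq_zero_iff.mp (by omega)
    subst hs; subst ht
    simp [eta_nil]
  | succ N ih =>
    intro s t hN hlen
    by_cases hs : s = []
    · have ht : t = [] := List.length_eq_zero_iff.mp (by subst hs; simpa using hlen.symm)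
      subst hs; subst ht; simp [eta_nil]
    · have ht : t ≠ [] := by
        intro hh; subst hh; exact hs (List.length_eq_zero_iff.mp (by simpa using hlen))
      rw [eta_cons re hre s t hs ht]
      by_cases htake : s.take re = t.take re
      · rw [if_pos htake]
        have hlen' : (s.drop re).length = (t.drop re).length := by simp [hlen]
        have hN' : (s.drop re).length ≤ N := by
          have : 1 ≤ s.length := List.length_pos_iff.mpr hs
          simp only [List.length_drop]; omega
        rw [Option.map_eq_none_iff, ih (s.drop re) (t.drop re) hN' hlen']
        constructor
        · intro hdrop
          rw [← List.take_append_drop re s, ← List.take_append_drop re t, htake, hdrop]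
        · intro hh; rw [hh]
      · rw [if_neg htake]
        simp only [reduceCtorEq, false_iff]
        intro hh; exact htake (by rw [hh])

lemma eta_eq_none_iff (re : ℕ) (hre : 0 < re) (s t : List Bool)
    (hlen : s.length = t.length) : eta re s t = none ↔ s = t :=
  eta_eq_none_iff_aux re hre s.length s t le_rfl hlen

/-- First index at which two lists differ (garbage if they are equal or a prefix). -/
def fd : List Bool → List Bool → ℕ
  | x :: a, y :: c => if x = y then fd a c + 1 else 0
  | _, _ => 0

lemma fd_comm : ∀ a c : List Bool, fd a c = fd c a := by
  intro a
  induction a with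
  | nil => intro c; cases c <;> rfl
  | cons x a ih =>
    intro c
    cases c with
    | nil => rfl
    | cons y c =>
      rw [fd, fd, ih c]
      by_cases h : x = y
      · simp [h]
      · simp [h, Ne.symm h]

/-- `fd` as a function on unordered pairs. -/
def pairFD : Sym2 (List Bool) → ℕ := Sym2.lift ⟨fd, fd_comm⟩

@[simp] lemma pairFD_mk (a c : List Bool) : pairFD s(a, c) = fd a c := rfl

lemma fd_lt_length {a c : List Bool} (h : a.length = c.length) (hne : a ≠ c) :
    fd a c < a.length := by
  induction a generalizing c with
  | nil => cases c with
    | nil => exact absurd rfl hne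
    | cons y c => simp at h
  | cons x a ih =>
    cases c with
    | nil => simp at h
    | cons y c =>
      rw [fd]
      by_cases hxy : x = y
      · have hne' : a ≠ c := by rintro rfl; exact hne (by rw [hxy])
        have := ih (c := c) (by simpa using h) hne'
        simp [hxy]; omega
      · simp [hxy]

lemma take_eq_take_iff {a c : List Bool} (h : a.length = c.length) (hne : a ≠ c) (b : ℕ) :
    a.take b = c.take b ↔ b ≤ fd a c := by
  induction a generalizing c b with
  | nil => cases c with
    | nil => exact absurd rfl hne
    | cons y c => simp at h
  | cons x a ih =>
    cases c with
    | nil => simp at h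
    | cons y c =>
      cases b with
      | zero => simp
      | succ b =>
        rw [fd]
        by_cases hxy : x = y
        · have hne' : a ≠ c := by rintro rfl; exact hne (by rw [hxy])
          rw [if_pos hxy]
          simp only [List.take_succ_cons, hxy, List.cons.injEq, true_and]
          rw [ih (by simpa using h) hne' b]
          omega
        · rw [if_neg hxy]
          simp [hxy]

/-- The transformation describing the effect of truncation on `eta`. -/
def etaTake (re b : ℕ) : Option (ℕ × Sym2 (List Bool)) → Option (ℕ × Sym2 (List Bool))
  | none => none
  | some (k, P) => if b ≤ k * re + pairFD P then none
      else some (k, P.map (fun l => l.take (b - k * re)))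

lemma etaTake_succ (re b : ℕ) (hb : re ≤ b) (o : Option (ℕ × Sym2 (List Bool))) :
    etaTake re b (o.map (fun q => (q.1 + 1, q.2))) = (etaTake re (b - re) o).map (fun q => (q.1 + 1, q.2)) := by
  cases o with
  | none => rfl
  | some q =>
    obtain ⟨k, P⟩ := q
    simp only [Option.map_some, etaTake]
    have harith : b ≤ (k + 1) * re + pairFD P ↔ b - re ≤ k * re + pairFD P := by
      constructor <;> intro hh <;> [skip; skip] <;> (first | (rw [add_mul, one_mul] at *; omega))
    by_cases hcond : b - re ≤ k * re + pairFD P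
    · rw [if_pos (harith.mpr hcond), if_pos hcond, Option.map_none]
    · rw [if_neg (fun hh => hcond (harith.mp hh)), if_neg hcond, Option.map_some]
      have : b - (k + 1) * re = b - re - k * re := by rw [add_mul, one_mul]; omega
      rw [this]

lemma eta_take_aux (re : ℕ) (hre : 0 < re) : ∀ (N : ℕ) (s t : List Bool) (b : ℕ),
    s.length ≤ N → s.length = t.length →
    eta re (s.take b) (t.take b) = etaTake re b (eta re s t) := by
  intro N
  induction N with
  | zero =>
    intro s t b hN hlen
    have hs : s = [] := List.length_eq_zero_iff.mp (by omega)
    have ht : t = [] := List.length_eq_zero_iff.mp (by omega)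
    subst hs; subst ht
    simp [eta_nil, etaTake]
  | succ N ih =>
    intro s t b hN hlen
    by_cases hs : s = []
    · have ht : t = [] := List.length_eq_zero_iff.mp (by subst hs; simpa using hlen.symm)
      subst hs; subst ht; simp [eta_nil, etaTake]
    · have ht : t ≠ [] := by
        intro hh; subst hh; exact hs (List.length_eq_zero_iff.mp (by simpa using hlen))
      rcases Nat.eq_zero_or_pos b with hb | hb
      · subst hb
        rw [List.take_zero, List.take_zero, eta_nil]
        cases hst : eta re s t with
        | none => rfl
        | some q =>
          obtain ⟨k, P⟩ := q
          simp [etaTake]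
      · -- b ≥ 1, s and t nonempty
        have hsb : s.take b ≠ [] := by
          simp only [ne_eq, List.take_eq_nil_iff]
          push_neg; exact ⟨by omega, hs⟩
        have htb : t.take b ≠ [] := by
          simp only [ne_eq, List.take_eq_nil_iff]
          push_neg; exact ⟨by omega, ht⟩
        rw [eta_cons re hre _ _ hsb htb, eta_cons re hre s t hs ht]
        rw [List.take_take, List.take_take (i := re) (j := b), List.drop_take (i := re) (j := b) (l := s), List.drop_take (i := re) (j := b) (l := t)]
        have hlentake : (s.take re).length = (t.take re).length := by simp [hlen]
        rcases le_or_gt b re with hble | hblt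
        · -- case b ≤ re
          rw [min_eq_right hble]
          have hb0 : b - re = 0 := by omega
          rw [hb0, List.take_zero, List.take_zero, eta_nil, Option.map_none]
          by_cases htake : s.take re = t.take re
          · rw [if_pos htake]
            by_cases hbtake : s.take b = t.take b
            · rw [if_pos hbtake]
              cases hst : eta re (s.drop re) (t.drop re) with
              | none => rfl
              | some q =>
                obtain ⟨k, P⟩ := q
                simp only [Option.map_some, etaTake]
                rw [if_pos (by nlinarith [Nat.le_mul_of_pos_left re (show 0 < k + 1 by omega)])]
            · exfalso
              apply hbtake
              have : s.take b = (s.take re).take b := by rw [List.take_take, min_eq_left hble]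
              rw [this, htake, List.take_take, min_eq_left hble]
          · rw [if_neg htake]
            have hstne : s.take b = (s.take re).take b := by
              rw [List.take_take, min_eq_left hble]
            have httne : t.take b = (t.take re).take b := by
              rw [List.take_take, min_eq_left hble]
            by_cases hbtake : s.take b = t.take b
            · rw [if_pos hbtake]
              simp only [etaTake, pairFD_mk]
              refine (if_pos ?_).symm
              have := (take_eq_take_iff hlentake htake b).mp (by rw [← hstne, ← httne]; exact hbtake)
              omega
            · rw [if_neg hbtake]
              simp only [etaTake, pairFD_mk]
              have hfd : ¬ b ≤ fd (s.take re) (t.take re) := by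
                intro hh
                exact hbtake (by rw [hstne, httne]; exact (take_eq_take_iff hlentake htake b).mpr hh)
              refine Eq.trans ?_ (if_neg (by simpa using hfd)).symm
              rw [Sym2.map_pair_eq]
              simp only [Nat.zero_mul, Nat.sub_zero]
              rw [← hstne, ← httne]
        · -- case re < b
          rw [min_eq_left (le_of_lt hblt)]
          by_cases htake : s.take re = t.take re
          · rw [if_pos htake, if_pos htake]
            have hlen' : (s.drop re).length = (t.drop re).length := by simp [hlen]
            have hN' : (s.drop re).length ≤ N := by
              have : 1 ≤ s.length := List.length_pos_iff.mpr hs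
              simp only [List.length_drop]; omega
            rw [ih (s.drop re) (t.drop re) (b - re) hN' hlen']
            rw [etaTake_succ re b (le_of_lt hblt)]
          · rw [if_neg htake, if_neg htake]
            simp only [etaTake, pairFD_mk]
            have hfdlt : fd (s.take re) (t.take re) < (s.take re).length :=
              fd_lt_length hlentake htake
            have hlenle : (s.take re).length ≤ re := by simp
            simp only [show ¬ (b ≤ 0 * re + fd (List.take re s) (List.take re t)) by omega, if_false]
            rw [Sym2.map_pair_eq]
            simp only [Nat.zero_mul, Nat.sub_zero]
            rw [List.take_of_length_le (l := s.take re) (i := b) (le_trans hlenle (le_of_lt hblt)),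
              List.take_of_length_le (l := t.take re) (i := b)
                (by rw [← hlentake]; exact le_trans hlenle (le_of_lt hblt))]

lemma eta_take (re : ℕ) (hre : 0 < re) (s t : List Bool) (b : ℕ)
    (hlen : s.length = t.length) :
    eta re (s.take b) (t.take b) = etaTake re b (eta re s t) :=
  eta_take_aux re hre s.length s t b le_rfl hlen


lemma xi_nil (r : ℕ → ℕ) (e : ℕ) : xi r e [] [] = [] := by
  simp [xi, blocksOf_nil]

lemma xi_cons (r : ℕ → ℕ) (e : ℕ) (hR : 0 < r (e+1)) (v w : List Bool)
    (hv : v ≠ []) (hw : w ≠ []) :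
    xi r e v w = eta (r e) (v.take (r (e+1))) (w.take (r (e+1)))
      :: xi r e (v.drop (r (e+1))) (w.drop (r (e+1))) := by
  unfold xi
  rw [blocksOf_cons _ hR v hv, blocksOf_cons _ hR w hw]
  rfl

/-- The transformation describing the effect of truncation on `xi`. -/
def xiTake (re R : ℕ) : ℕ → List (Option (ℕ × Sym2 (List Bool))) → List (Option (ℕ × Sym2 (List Bool)))
  | _, [] => []
  | c, o :: L => if c = 0 then [] else etaTake re c o :: xiTake re R (c - R) L

lemma xi_take_aux (r : ℕ → ℕ) (e : ℕ) (h0 : 0 < r e) (h1 : 0 < r (e+1)) :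
    ∀ (N : ℕ) (v w : List Bool) (c : ℕ), v.length ≤ N → v.length = w.length →
    xi r e (v.take c) (w.take c) = xiTake (r e) (r (e+1)) c (xi r e v w) := by
  intro N
  induction N with
  | zero =>
    intro v w c hN hlen
    have hv : v = [] := List.length_eq_zero_iff.mp (by omega)
    have hw : w = [] := List.length_eq_zero_iff.mp (by omega)
    subst hv; subst hw
    simp [xi_nil, xiTake]
  | succ N ih =>
    intro v w c hN hlen
    by_cases hv : v = []
    · have hw : w = [] := List.length_eq_zero_iff.mp (by subst hv; simpa using hlen.symm)
      subst hv; subst hw; simp [xi_nil, xiTake]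
    · have hw : w ≠ [] := by
        intro hh; subst hh; exact hv (List.length_eq_zero_iff.mp (by simpa using hlen))
      rw [xi_cons r e h1 v w hv hw]
      rcases Nat.eq_zero_or_pos c with hc | hc
      · subst hc
        rw [List.take_zero, List.take_zero, xi_nil, xiTake, if_pos rfl]
      · have hvc : v.take c ≠ [] := by
          simp only [ne_eq, List.take_eq_nil_iff]; push_neg; exact ⟨by omega, hv⟩
        have hwc : w.take c ≠ [] := by
          simp only [ne_eq, List.take_eq_nil_iff]; push_neg; exact ⟨by omega, hw⟩
        rw [xi_cons r e h1 _ _ hvc hwc, xiTake, if_neg (by omega)]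
        congr 1
        · have hh := eta_take (r e) h0 (v.take (r (e+1))) (w.take (r (e+1))) c (by simp [hlen])
          simpa [List.take_take, min_comm] using hh
        · rw [List.drop_take (j := c) (l := v), List.drop_take (j := c) (l := w)]
          have hlen' : (v.drop (r (e+1))).length = (w.drop (r (e+1))).length := by
            simp [hlen]
          have hN' : (v.drop (r (e+1))).length ≤ N := by
            have : 1 ≤ v.length := List.length_pos_iff.mpr hv
            simp only [List.length_drop]; omega
          exact ih _ _ _ hN' hlen'

lemma xi_take (r : ℕ → ℕ) (e : ℕ) (h0 : 0 < r e) (h1 : 0 < r (e+1))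
    (v w : List Bool) (c : ℕ) (hlen : v.length = w.length) :
    xi r e (v.take c) (w.take c) = xiTake (r e) (r (e+1)) c (xi r e v w) :=
  xi_take_aux r e h0 h1 v.length v w c le_rfl hlen

/-- **Lemma 4.2(iii).** For `d ≥ 0` and `1 ≤ α' ≤ α`, the coloring `c_d` refines
`(v, w) ↦ c_d(π_{α'}(v), π_{α'}(w))` on `{0,1}^α × {0,1}^α`. -/
theorem stmt7 (α α' d : ℕ) (hα' : 1 ≤ α') (hα : α' ≤ α) (r : ℕ → ℕ) (hr0 : r 0 = 1)
    (hrpos : ∀ e, 0 < r e) (hrdvd : ∀ e, r e ∣ r (e + 1))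
    (v w x y : List Bool) (hv : v.length = α) (hw : w.length = α)
    (hx : x.length = α) (hy : y.length = α)
    (h : cColor r d v w = cColor r d x y) :
    cColor r d (v.take α') (w.take α') = cColor r d (x.take α') (y.take α') := by
  have hj : ∀ j, j < d + 1 → xi r (d - j) v w = xi r (d - j) x y := by
    intro j hjlt
    have h' := congrArg (fun L => L[j]?) h
    simp only [cColor, List.getElem?_map, List.getElem?_range hjlt, Option.map_some] at h'
    exact Option.some.inj h'
  simp only [cColor]
  refine List.map_congr_left ?_
  intro j hjmem
  rw [List.mem_range] at hjmem
  rw [xi_take r (d - j) (hrpos _) (hrpos _) v w α' (by rw [hv, hw]),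
    xi_take r (d - j) (hrpos _) (hrpos _) x y α' (by rw [hx, hy]),
    hj j hjmem]
end

section
/- Let p ≥ 1 and α be positive integers, fix parameters r_0 = 1, r_1, …, r_{p+1} with r_{e−1} dividing r_e for each e, and let S ⊆ {0,1}^α be a set with |S| ≤ p+3. If |C_I^{(p)}| + |C_E^{(p)}| ≤ |S| − 2, then there exists an index d with 1 ≤ d ≤ p such that η_{d−1} is injective on C_E^{(d)}: distinct unordered pairs {v″, w″} ∈ C_E^{(d)} have distinct values η_{d−1}(v″, w″). -/
/- ### chunking groundwork -/
section Chunks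

def chunksF (r : ℕ) : List Bool → List (List Bool)
  | [] => []
  | x :: xs => (x :: xs.take (r-1)) :: chunksF r (xs.drop (r-1))
  termination_by l => l.length
  decreasing_by simp [List.length_drop]

@[simp] lemma chunksF_nil (r : ℕ) : chunksF r [] = [] := by simp [chunksF]

lemma chunksF_cons (r : ℕ) (x : Bool) (xs : List Bool) :
    chunksF r (x :: xs) = (x :: xs.take (r-1)) :: chunksF r (xs.drop (r-1)) := by
  simp [chunksF]

lemma chunksF_small (r : ℕ) (t : List Bool) (h1 : t ≠ []) (h2 : t.length ≤ r) :
    chunksF r t = [t] := by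
  cases t with
  | nil => simp at h1
  | cons y tl =>
    rw [chunksF_cons]
    have hlen : tl.length ≤ r - 1 := by simp at h2; omega
    rw [List.take_of_length_le hlen, List.drop_eq_nil_of_le hlen]
    simp

lemma chunksF_append (r : ℕ) (b x : List Bool) (hb : b.length = r) (hr : 0 < r) :
    chunksF r (b ++ x) = b :: chunksF r x := by
  cases b with
  | nil => simp at hb; omega
  | cons y tl =>
    have hlen : tl.length = r - 1 := by simp at hb; omega
    rw [List.cons_append, chunksF_cons, List.take_left' hlen, List.drop_left' hlen]

lemma toChunks_go_spec (r : ℕ) (hr : 0 < r) :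
    ∀ (xs : List Bool) (a : Array Bool) (b : Array (List Bool)),
      0 < a.size → a.size ≤ r →
      List.toChunks.go r xs a b = b.toList ++ chunksF r (a.toList ++ xs) := by
  intro xs
  induction xs with
  | nil =>
    intro a b h0 hle
    have hl := Array.size_eq_length_toList (xs := a)
    simp only [List.toChunks.go, Array.toList_push, List.append_nil]
    rw [chunksF_small r a.toList (List.ne_nil_of_length_pos (by rw [Array.length_toList]; omega)) (by omega)]
  | cons x xs ih =>
    intro a b h0 hle
    by_cases hsz : a.size = r
    · simp only [List.toChunks.go, hsz, beq_self_eq_true, if_true]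
      rw [ih _ _ (by simp [Array.mkEmpty_eq]) (by simp [Array.mkEmpty_eq]; omega)]
      have hl : a.toList.length = r := by rw [← Array.size_eq_length_toList, hsz]
      rw [show a.toList ++ x :: xs = a.toList ++ ([x] ++ xs) by simp,
        chunksF_append r a.toList ([x] ++ xs) hl hr]
      simp [Array.mkEmpty_eq]
    · have hne : (a.size == r) = false := by simp [hsz]
      simp only [List.toChunks.go, hne, Bool.false_eq_true, if_false]
      rw [ih _ _ (by simp [Array.size_push]) (by simp [Array.size_push]; omega)]
      simp

lemma toChunks_eq_s10 (r : ℕ) (hr : 0 < r) (l : List Bool) : l.toChunks r = chunksF r l := by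
  cases l with
  | nil => simp [List.toChunks]
  | cons x xs =>
    obtain ⟨r', rfl⟩ : ∃ r', r = r' + 1 := ⟨r - 1, by omega⟩
    show List.toChunks.go (r'+1) xs #[x] #[] = _
    rw [toChunks_go_spec _ hr xs #[x] #[] (by simp) (by simp)]
    simp

end Chunks

/- ### eta evaluation lemmas -/
section Eta

lemma find?_enumFrom_shift (f : (List Bool × List Bool) → Bool)
    (Z : List (List Bool × List Bool)) :
    ∀ n : ℕ, ((Z.zipIdx n).map Prod.swap).find? (fun q => f q.2)
      = ((Z.zipIdx.map Prod.swap).find? (fun q => f q.2)).map (fun q => (n + q.1, q.2)) := by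
  induction Z with
  | nil => intro n; simp
  | cons a Z ih =>
    intro n
    rw [List.zipIdx_cons, List.zipIdx_cons, List.map_cons, List.map_cons]
    by_cases hf : f a
    · rw [List.find?_cons_of_pos (by simpa using hf), List.find?_cons_of_pos (by simpa using hf)]
      simp
    · rw [List.find?_cons_of_neg (by simpa using hf), List.find?_cons_of_neg (by simpa using hf)]
      rw [ih (n+1), ih 1, Option.map_map]
      congr 1
      funext q
      simp only [Function.comp_apply]
      rw [Nat.add_assoc]

lemma eta_peel (r : ℕ) (hr : 0 < r) (b b' x x' : List Bool)
    (hb : b.length = r) (hb' : b'.length = r) :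
    eta r (b ++ x) (b' ++ x')
      = if b = b' then (eta r x x').map (fun q => (q.1 + 1, q.2)) else some (0, s(b, b')) := by
  unfold eta blocksOf
  rw [toChunks_eq_s10 r hr, toChunks_eq_s10 r hr, toChunks_eq_s10 r hr, toChunks_eq_s10 r hr,
    chunksF_append r b x hb hr, chunksF_append r b' x' hb' hr, List.zip_cons_cons,
    List.zipIdx_cons, List.map_cons]
  by_cases hbb : b = b'
  · subst hbb
    rw [List.find?_cons_of_neg (by simp)]
    rw [find?_enumFrom_shift (fun q => q.1 != q.2) _ 1, Option.map_map, Option.map_map]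
    rw [if_pos rfl]
    congr 1
    funext q
    simp only [Function.comp_apply]
    rw [Nat.add_comm]
  · rw [List.find?_cons_of_pos (by simpa using hbb), if_neg hbb]
    simp

lemma eta_base (r : ℕ) (t t' : List Bool) (h1 : t ≠ []) (h2 : t.length ≤ r)
    (h3 : t' ≠ []) (h4 : t'.length ≤ r) :
    eta r t t' = if t = t' then none else some (0, s(t, t')) := by
  have hr : 0 < r := by
    have : 0 < t.length := List.length_pos_iff.mpr h1
    omega
  unfold eta blocksOf
  rw [toChunks_eq_s10 r hr, toChunks_eq_s10 r hr, chunksF_small r t h1 h2, chunksF_small r t' h3 h4]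
  by_cases htt : t = t'
  · subst htt
    rw [List.zip_cons_cons, List.zipIdx_cons, List.map_cons, List.find?_cons_of_neg (by simp)]
    simp
  · rw [List.zip_cons_cons, List.zipIdx_cons, List.map_cons, List.find?_cons_of_pos (by simpa using htt), if_neg htt]
    simp

lemma eta_deep (r : ℕ) (hr : 0 < r) :
    ∀ (k : ℕ) (m t t' : List Bool), m.length = r * k → t ≠ [] → t.length ≤ r →
      t' ≠ [] → t'.length ≤ r → t ≠ t' →
      eta r (m ++ t) (m ++ t') = some (k, s(t, t')) := by
  intro k
  induction k with
  | zero =>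
    intro m t t' hm h1 h2 h3 h4 h5
    have : m = [] := List.eq_nil_of_length_eq_zero (by omega)
    subst this
    simp only [List.nil_append]
    rw [eta_base r t t' h1 h2 h3 h4, if_neg h5]
  | succ k ih =>
    intro m t t' hm h1 h2 h3 h4 h5
    have hrm : r ≤ m.length := by rw [hm]; nlinarith
    have hsplit : m = m.take r ++ m.drop r := (List.take_append_drop r m).symm
    have hbl : (m.take r).length = r := by rw [List.length_take]; omega
    have hdl : (m.drop r).length = r * k := by rw [List.length_drop]; rw [hm]; ring_nf; omega
    rw [hsplit, List.append_assoc, List.append_assoc,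
      eta_peel r hr _ _ _ _ hbl hbl, if_pos rfl,
      ih (m.drop r) t t' hdl h1 h2 h3 h4 h5]
    rfl

lemma eta_shallow (r : ℕ) (hr : 0 < r) :
    ∀ (k : ℕ) (m m' t t' : List Bool), m.length = r * k → m'.length = r * k → m ≠ m' →
      ∃ i o, eta r (m ++ t) (m' ++ t') = some (i, o) ∧ i < k := by
  intro k
  induction k with
  | zero =>
    intro m m' t t' hm hm' hne
    exfalso
    apply hne
    rw [List.eq_nil_of_length_eq_zero (by omega : m.length = 0),
      List.eq_nil_of_length_eq_zero (by omega : m'.length = 0)]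
  | succ k ih =>
    intro m m' t t' hm hm' hne
    have hrm : r ≤ m.length := by rw [hm]; nlinarith
    have hrm' : r ≤ m'.length := by rw [hm']; nlinarith
    have hbl : (m.take r).length = r := by rw [List.length_take]; omega
    have hbl' : (m'.take r).length = r := by rw [List.length_take]; omega
    have hdl : (m.drop r).length = r * k := by rw [List.length_drop, hm]; ring_nf; omega
    have hdl' : (m'.drop r).length = r * k := by rw [List.length_drop, hm']; ring_nf; omega
    have hsplit : m = m.take r ++ m.drop r := (List.take_append_drop r m).symm
    have hsplit' : m' = m'.take r ++ m'.drop r := (List.take_append_drop r m').symm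
    by_cases hb : m.take r = m'.take r
    · have hd2 : m.drop r ≠ m'.drop r := by
        intro hdd
        apply hne
        rw [hsplit, hsplit', hb, hdd]
      obtain ⟨i, o, he, hi⟩ := ih (m.drop r) (m'.drop r) t t' hdl hdl' hd2
      refine ⟨i + 1, o, ?_, by omega⟩
      rw [hsplit, hsplit', List.append_assoc, List.append_assoc,
        eta_peel r hr _ _ _ _ hbl hbl', if_pos hb, he]
      rfl
    · refine ⟨0, s(m.take r, m'.take r), ?_, by omega⟩
      rw [hsplit, hsplit', List.append_assoc, List.append_assoc,
        eta_peel r hr _ _ _ _ hbl hbl', if_neg hb]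
      rw [← hsplit, ← hsplit']

end Eta

/- ### alphaD arithmetic -/
section AlphaD

lemma alphaD_le (rd α : ℕ) : alphaD rd α ≤ α - 1 := by
  unfold alphaD
  calc rd * ((α - 1) / rd) = (α - 1) / rd * rd := Nat.mul_comm _ _
    _ ≤ α - 1 := Nat.div_mul_le_self _ _

lemma alphaD_dvd (rd α : ℕ) : rd ∣ alphaD rd α := Dvd.intro _ rfl

lemma alphaD_mono (ρ rd α : ℕ) (hρ : 0 < ρ) (hdvd : ρ ∣ rd) :
    alphaD rd α ≤ alphaD ρ α := by
  obtain ⟨k, hk⟩ : ρ ∣ alphaD rd α := hdvd.trans (alphaD_dvd rd α)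
  have h1 : alphaD rd α ≤ α - 1 := alphaD_le rd α
  have h2 : k ≤ (α - 1) / ρ := Nat.le_div_iff_mul_le hρ |>.mpr (by rw [Nat.mul_comm, ← hk]; exact h1)
  calc alphaD rd α = ρ * k := hk
    _ ≤ ρ * ((α - 1) / ρ) := Nat.mul_le_mul_left ρ h2
    _ = alphaD ρ α := rfl

lemma alphaD_tail_le (rd α : ℕ) (hr : 0 < rd) : α - alphaD rd α ≤ rd := by
  have h1 := Nat.div_add_mod (α - 1) rd
  have h2 : (α - 1) % rd < rd := Nat.mod_lt _ hr
  unfold alphaD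
  omega

end AlphaD

/- ### finset membership and counting helpers -/
section Helpers

lemma mem_CE_intro (r : ℕ → ℕ) (α : ℕ) (S : Finset (List Bool)) (e : ℕ)
    (V W : List Bool) (hV : V ∈ S) (hW : W ∈ S)
    (ht : V.take (alphaD (r e) α) = W.take (alphaD (r e) α))
    (hd : V.drop (alphaD (r e) α) ≠ W.drop (alphaD (r e) α)) :
    s(V.drop (alphaD (r e) α), W.drop (alphaD (r e) α)) ∈ CEset r α S e := by
  unfold CEset
  exact Finset.mem_image.mpr ⟨(V, W),
    Finset.mem_filter.mpr ⟨Finset.mem_product.mpr ⟨hV, hW⟩, ht, hd⟩, rfl⟩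

lemma mem_CE_elim' {r : ℕ → ℕ} {α : ℕ} {S : Finset (List Bool)} {e : ℕ}
    {z : Sym2 (List Bool)} (h : z ∈ CEset r α S e) :
    ∃ V W, V ∈ S ∧ W ∈ S ∧ V.take (alphaD (r e) α) = W.take (alphaD (r e) α) ∧
      V.drop (alphaD (r e) α) ≠ W.drop (alphaD (r e) α) ∧
      z = s(V.drop (alphaD (r e) α), W.drop (alphaD (r e) α)) := by
  unfold CEset at h
  obtain ⟨⟨V, W⟩, hmem, heq⟩ := Finset.mem_image.mp h
  obtain ⟨hprod, ht, hd⟩ := Finset.mem_filter.mp hmem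
  obtain ⟨hV, hW⟩ := Finset.mem_product.mp hprod
  exact ⟨V, W, hV, hW, ht, hd, heq.symm⟩

lemma mem_CE_elim {r : ℕ → ℕ} {α : ℕ} {S : Finset (List Bool)} {e : ℕ}
    {v w : List Bool} (h : s(v, w) ∈ CEset r α S e) :
    ∃ V W, V ∈ S ∧ W ∈ S ∧ V.take (alphaD (r e) α) = W.take (alphaD (r e) α) ∧
      v = V.drop (alphaD (r e) α) ∧ w = W.drop (alphaD (r e) α) ∧ v ≠ w := by
  obtain ⟨V, W, hV, hW, ht, hd, heq⟩ := mem_CE_elim' h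
  rcases Sym2.eq_iff.mp heq with ⟨h1, h2⟩ | ⟨h1, h2⟩
  · exact ⟨V, W, hV, hW, ht, h1, h2, by rw [h1, h2]; exact hd⟩
  · exact ⟨W, V, hW, hV, ht.symm, h1, h2, by rw [h1, h2]; exact fun hh => hd hh.symm⟩

lemma card_lemma {β γ : Type*} [DecidableEq β] [DecidableEq γ]
    (s : Finset β) (t : Finset γ) (f : β → γ) (X : β) (hX : X ∈ s)
    (hsurj : ∀ c ∈ t, ∃ b ∈ s.erase X, f b = c) : t.card + 1 ≤ s.card := by
  have h1 : t ⊆ (s.erase X).image f := by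
    intro c hc
    obtain ⟨b, hb, he⟩ := hsurj c hc
    exact Finset.mem_image.mpr ⟨b, hb, he⟩
  have h2 : t.card ≤ ((s.erase X).image f).card := Finset.card_le_card h1
  have h3 : ((s.erase X).image f).card ≤ (s.erase X).card := Finset.card_image_le
  have h4 : (s.erase X).card = s.card - 1 := Finset.card_erase_of_mem hX
  have h5 : 1 ≤ s.card := Finset.card_pos.mpr ⟨X, hX⟩
  omega

lemma list_ext_take_drop (n : ℕ) (A B : List Bool)
    (h1 : A.take n = B.take n) (h2 : A.drop n = B.drop n) : A = B := by
  rw [← List.take_append_drop n A, h1, h2, List.take_append_drop]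

end Helpers

/- ### the step lemma -/
lemma CE_step (p α : ℕ) (r : ℕ → ℕ) (S : Finset (List Bool)) (hα : 1 ≤ α)
    (hS : ∀ v ∈ S, v.length = α) (d : ℕ) (hd1 : 1 ≤ d)
    (hρ : 0 < r (d-1)) (hdvd : r (d-1) ∣ r d)
    (col : ∃ v w x y : List Bool, s(v,w) ∈ CEset r α S d ∧ s(x,y) ∈ CEset r α S d ∧
      eta (r (d-1)) v w = eta (r (d-1)) x y ∧ s(v,w) ≠ s(x,y)) :
    (CEset r α S (d-1)).card + 1 ≤ (CEset r α S d).card := by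
  set ρ := r (d-1) with hρdef
  set aa := alphaD ρ α with haa
  set bb := alphaD (r d) α with hbb
  have hba : bb ≤ aa := alphaD_mono ρ (r d) α hρ hdvd
  have haal : aa ≤ α - 1 := alphaD_le ρ α
  set c := aa - bb with hc
  have hbc : bb + c = aa := by omega
  have hdvdc : ρ ∣ c := by
    have h1 : ρ ∣ aa := alphaD_dvd ρ α
    have h2 : ρ ∣ bb := hdvd.trans (alphaD_dvd (r d) α)
    exact Nat.dvd_sub h1 h2
  obtain ⟨k, hk⟩ := hdvdc
  have htail1 : 1 ≤ α - aa := by omega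
  have htail2 : α - aa ≤ ρ := alphaD_tail_le ρ α hρ
  -- generic facts about suffixes of elements of S
  have hdroplen : ∀ V ∈ S, (V.drop bb).length = α - bb := by
    intro V hV; rw [List.length_drop, hS V hV]
  have htakec : ∀ V ∈ S, ∀ W ∈ S, V.take aa = W.take aa →
      (V.drop bb).take c = (W.drop bb).take c := by
    intro V hV W hW ht
    rw [List.take_drop, List.take_drop, hbc, ht]
  have hdropc : ∀ V : List Bool, (V.drop bb).drop c = V.drop aa := by
    intro V; rw [List.drop_drop, hbc]
  -- eta computations
  have deepEta : ∀ v w : List Bool, v.length = α - bb → w.length = α - bb →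
      v ≠ w → v.take c = w.take c →
      eta ρ v w = some (k, s(v.drop c, w.drop c)) := by
    intro v w hlv hlw hvw hvwc
    have hcl : c ≤ α - bb := by omega
    have hmlen : (v.take c).length = ρ * k := by rw [List.length_take, ← hk]; omega
    have ht1 : v.drop c ≠ [] := List.ne_nil_of_length_pos (by rw [List.length_drop]; omega)
    have ht2 : (v.drop c).length ≤ ρ := by rw [List.length_drop]; omega
    have ht3 : w.drop c ≠ [] := List.ne_nil_of_length_pos (by rw [List.length_drop]; omega)
    have ht4 : (w.drop c).length ≤ ρ := by rw [List.length_drop]; omega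
    have ht5 : v.drop c ≠ w.drop c := by
      intro hdd
      exact hvw (list_ext_take_drop c v w hvwc hdd)
    have h1 : v = v.take c ++ v.drop c := (List.take_append_drop c v).symm
    have h2 : w = v.take c ++ w.drop c := by
      rw [hvwc]; exact (List.take_append_drop c w).symm
    have := eta_deep ρ hρ k (v.take c) (v.drop c) (w.drop c) hmlen ht1 ht2 ht3 ht4 ht5
    rw [← h1, ← h2] at this
    exact this
  have shallowEta : ∀ v w : List Bool, v.length = α - bb → w.length = α - bb →
      v.take c ≠ w.take c →
      ∃ i o, eta ρ v w = some (i, o) ∧ i < k := by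
    intro v w hlv hlw hvwc
    have hcl : c ≤ α - bb := by omega
    have hm1 : (v.take c).length = ρ * k := by rw [List.length_take, ← hk]; omega
    have hm2 : (w.take c).length = ρ * k := by rw [List.length_take, ← hk]; omega
    obtain ⟨i, o, he, hi⟩ := eta_shallow ρ hρ k (v.take c) (w.take c) (v.drop c) (w.drop c) hm1 hm2 hvwc
    rw [List.take_append_drop, List.take_append_drop] at he
    exact ⟨i, o, he, hi⟩
  -- unpack the collision
  obtain ⟨v, w, x, y, hvw, hxy, heq, hne⟩ := col
  obtain ⟨V, W, hV, hW, hTvw, hv, hw, hvwne⟩ := mem_CE_elim hvw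
  obtain ⟨X, Y, hX, hY, hTxy, hx, hy, hxyne⟩ := mem_CE_elim hxy
  have hlv : v.length = α - bb := by rw [hv]; exact hdroplen V hV
  have hlw : w.length = α - bb := by rw [hw]; exact hdroplen W hW
  have hlx : x.length = α - bb := by rw [hx]; exact hdroplen X hX
  have hly : y.length = α - bb := by rw [hy]; exact hdroplen Y hY
  -- the canonical lift of an element of CEset (d-1)
  have hcanon : ∀ Cc ∈ CEset r α S (d-1), ∃ V' W', V' ∈ S ∧ W' ∈ S ∧
      s(V'.drop bb, W'.drop bb) ∈ CEset r α S d ∧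
      (V'.drop bb).take c = (W'.drop bb).take c ∧
      Sym2.map (List.drop c) s(V'.drop bb, W'.drop bb) = Cc := by
    intro Cc hCc
    obtain ⟨V', W', hV', hW', hT', hD', hCeq⟩ := mem_CE_elim' hCc
    refine ⟨V', W', hV', hW', ?_, htakec V' hV' W' hW' hT', ?_⟩
    · apply mem_CE_intro r α S d V' W' hV' hW'
      · have h := congrArg (List.take bb) hT'
        rwa [List.take_take, List.take_take, min_eq_left hba] at h
      · intro hdd
        apply hD'
        rw [← hdropc V', ← hdropc W', hdd]
    · rw [Sym2.map_pair_eq, hdropc V', hdropc W', hCeq]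
  by_cases h1 : v.take c = w.take c <;> by_cases h2 : x.take c = y.take c
  · -- deep-deep
    have e1 := deepEta v w hlv hlw hvwne h1
    have e2 := deepEta x y hlx hly hxyne h2
    rw [e1, e2] at heq
    have hC : s(v.drop c, w.drop c) = s(x.drop c, y.drop c) := by
      simpa using heq
    apply card_lemma (CEset r α S d) (CEset r α S (d-1)) (Sym2.map (List.drop c)) s(x,y) hxy
    intro Cc hCc
    obtain ⟨V', W', hV', hW', hBmem, hBtake, hBmap⟩ := hcanon Cc hCc
    by_cases hBX : s(V'.drop bb, W'.drop bb) = s(x, y)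
    · refine ⟨s(v, w), Finset.mem_erase.mpr ⟨hne, hvw⟩, ?_⟩
      rw [Sym2.map_pair_eq, hC, ← hBmap, hBX, Sym2.map_pair_eq]
    · exact ⟨s(V'.drop bb, W'.drop bb), Finset.mem_erase.mpr ⟨hBX, hBmem⟩, hBmap⟩
  · -- deep-shallow: impossible
    exfalso
    have e1 := deepEta v w hlv hlw hvwne h1
    obtain ⟨i, o, e2, hik⟩ := shallowEta x y hlx hly h2
    rw [e1, e2] at heq
    simp only [Option.some.injEq, Prod.mk.injEq] at heq
    omega
  · -- shallow-deep: impossible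
    exfalso
    obtain ⟨i, o, e1, hik⟩ := shallowEta v w hlv hlw h1
    have e2 := deepEta x y hlx hly hxyne h2
    rw [e1, e2] at heq
    simp only [Option.some.injEq, Prod.mk.injEq] at heq
    omega
  · -- shallow-shallow
    apply card_lemma (CEset r α S d) (CEset r α S (d-1)) (Sym2.map (List.drop c)) s(v,w) hvw
    intro Cc hCc
    obtain ⟨V', W', hV', hW', hBmem, hBtake, hBmap⟩ := hcanon Cc hCc
    refine ⟨s(V'.drop bb, W'.drop bb), Finset.mem_erase.mpr ⟨?_, hBmem⟩, hBmap⟩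
    intro hBX
    rcases Sym2.eq_iff.mp hBX with ⟨ha, hb⟩ | ⟨ha, hb⟩
    · apply h1; rw [← ha, ← hb]; exact hBtake
    · apply h1; rw [← ha, ← hb]; exact hBtake.symm



/-- **Claim 5.1.** Let `S ⊆ {0,1}^α` with `|S| ≤ p+3`. If
`|C_I^{(p)}| + |C_E^{(p)}| ≤ |S| − 2`, then there is an index `1 ≤ d ≤ p` such that
`η_{d−1}` is injective on `C_E^{(d)}`: distinct unordered pairs in `C_E^{(d)}` have
distinct values of `η_{d−1}`. -/
theorem stmt10 (p α : ℕ) (hp : 1 ≤ p) (hα : 1 ≤ α) (r : ℕ → ℕ) (hr0 : r 0 = 1)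
    (hrpos : ∀ e ≤ p + 1, 0 < r e) (hrdvd : ∀ e < p + 1, r e ∣ r (e + 1))
    (S : Finset (List Bool)) (hS : ∀ v ∈ S, v.length = α) (hcard : S.card ≤ p + 3)
    (h : (CIset r p α S p).card + (CEset r α S p).card + 2 ≤ S.card) :
    ∃ d, 1 ≤ d ∧ d ≤ p ∧
      ∀ v w x y : List Bool, s(v, w) ∈ CEset r α S d → s(x, y) ∈ CEset r α S d →
        eta (r (d - 1)) v w = eta (r (d - 1)) x y → s(v, w) = s(x, y) := by
  by_contra hcon
  push_neg at hcon
  -- chain: collisions at every level force large CEsets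
  have chain : ∀ d, 1 ≤ d → d ≤ p → d + 1 ≤ (CEset r α S d).card := by
    intro d
    induction d with
    | zero => omega
    | succ n ih =>
      intro _ hle
      have col := hcon (n+1) (by omega) hle
      rcases Nat.eq_zero_or_pos n with hn0 | hn1
      · subst hn0
        obtain ⟨v, w, x, y, hvw, hxy, hee, hne⟩ := col
        have : 1 < (CEset r α S (0+1)).card :=
          Finset.one_lt_card.mpr ⟨_, hvw, _, hxy, hne⟩
        omega
      · have hstep := CE_step p α r S hα hS (n+1) (by omega)
          (by simpa using hrpos n (by omega))
          (by simpa using hrdvd n (by omega)) col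
        have hn := ih hn1 (by omega)
        simp only [Nat.add_sub_cancel] at hstep
        omega
  have hchain := chain p hp le_rfl
  have hCE : (CEset r α S p).card = p + 1 := by omega
  have hCI : (CIset r p α S p).card = 0 := by omega
  have hScard : S.card = p + 3 := by omega
  set ap := alphaD (r p) α with hap
  have hall : ∀ V ∈ S, ∀ W ∈ S, V.take ap = W.take ap := by
    intro V hV W hW
    by_contra hnet
    have hmem : (cColor r p (V.take ap) (W.take ap),
        eta (r (p-1)) (V.drop ap) (W.drop ap)) ∈ CIset r p α S p := by
      unfold CIset
      exact Finset.mem_image.mpr ⟨(V, W),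
        Finset.mem_filter.mpr ⟨Finset.mem_product.mpr ⟨hV, hW⟩, hnet⟩, rfl⟩
    have : 0 < (CIset r p α S p).card := Finset.card_pos.mpr ⟨_, hmem⟩
    omega
  obtain ⟨v₀, hv₀⟩ : S.Nonempty := Finset.card_pos.mp (by omega)
  have hinj : (S.erase v₀).card ≤ (CEset r α S p).card := by
    apply Finset.card_le_card_of_injOn (fun W => s(v₀.drop ap, W.drop ap))
    · intro W hW
      obtain ⟨hWne, hWS⟩ := Finset.mem_erase.mp hW
      apply mem_CE_intro r α S p v₀ W hv₀ hWS (hall v₀ hv₀ W hWS)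
      intro hdd
      exact hWne (list_ext_take_drop ap W v₀ (hall W hWS v₀ hv₀) hdd.symm).symm.symm
    · intro W hW W' hW' heq2
      obtain ⟨_, hWS⟩ := Finset.mem_erase.mp (hW)
      obtain ⟨_, hWS'⟩ := Finset.mem_erase.mp (hW')
      have hdd : W.drop ap = W'.drop ap := by
        rcases Sym2.eq_iff.mp heq2 with ⟨ha, hb⟩ | ⟨ha, hb⟩
        · exact hb
        · rw [hb, ← ha]
      exact list_ext_take_drop ap W W' (hall W hWS W' hWS') hdd
  have herase : (S.erase v₀).card = p + 2 := by
    rw [Finset.card_erase_of_mem hv₀]; omega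
  omega
end
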